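/- The inverse of the n×n Hilbert matrix H_n (with entries (H_n)_{ij} = 1/(i+j−1)) has integer entries given by h_{ij} = (−1)^{i+j} (i+j−1) C(n+i−1, n−j) C(n+j−1, n−i) C(i+j−2, i−1)², i.e., the matrix with these entries is a two-sided inverse of H_n. -/

import Mathlib

open Finset Polynomial

lemma nat_prodA (q p : ℕ) : q.factorial * ∏ m ∈ range p, (q + 1 + m) = (q + p).factorial := by
  induction p with
  | zero => simp
  | succ p ih =>
    rw [prod_range_succ, ← mul_assoc, ih, show q + (p+1) = (q+p)+1 by ring, Nat.factorial_succ]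
    ring

lemma q_prodA (q p : ℕ) : ∏ m ∈ range p, ((q : ℚ) + m + 1) = (q + p).factorial / q.factorial := by
  have h2 : ((q.factorial : ℚ) * ∏ m ∈ range p, ((q : ℚ) + 1 + m)) = ((q+p).factorial : ℚ) := by
    exact_mod_cast congrArg (Nat.cast (R := ℚ)) (nat_prodA q p)
  rw [eq_div_iff (by exact_mod_cast q.factorial_ne_zero), mul_comm, ← h2]
  congr 1
  exact prod_congr rfl fun m _ => by ring

lemma erase_decomp (n a : ℕ) (ha : a < n) :
    (range n).erase a = range a ∪ Ico (a+1) n := by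
  ext m; simp only [mem_erase, mem_range, mem_union, mem_Ico]; omega

lemma prod_succ_eq_factorial (a : ℕ) : ∏ m ∈ range a, (m+1) = a.factorial := by
  induction a with
  | zero => simp
  | succ a ih => rw [prod_range_succ, ih, Nat.factorial_succ]; ring

lemma nat_prod_front (a : ℕ) : ∏ m ∈ range a, (a - m) = a.factorial := by
  rw [← prod_range_reflect]
  rw [prod_congr rfl (fun m hm => show a - (a - 1 - m) = m + 1 by
    have := mem_range.mp hm; omega)]
  exact prod_succ_eq_factorial a

lemma nat_prod_back (n a : ℕ) (ha : a < n) :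
    ∏ m ∈ Ico (a+1) n, (m - a) = (n-1-a).factorial := by
  rw [Finset.prod_Ico_eq_prod_range]
  rw [prod_congr rfl (fun m _ => show a + 1 + m - a = m + 1 by omega)]
  rw [prod_succ_eq_factorial]
  congr 1
  omega

lemma q_prodQ (n a : ℕ) (ha : a < n) :
    ∏ m ∈ (range n).erase a, ((a : ℚ) - m)
      = (-1)^(n-1-a) * a.factorial * (n-1-a).factorial := by
  have hdisj : Disjoint (range a) (Ico (a+1) n) := by
    rw [Finset.disjoint_left]
    intro m h1 h2
    simp only [mem_range] at h1
    simp only [mem_Ico] at h2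
    omega
  rw [erase_decomp n a ha, prod_union hdisj]
  have h1 : ∏ m ∈ range a, ((a : ℚ) - m) = a.factorial := by
    rw [prod_congr rfl (fun m hm => show (a:ℚ) - m = ((a - m : ℕ) : ℚ) by
      have := mem_range.mp hm
      push_cast [Nat.cast_sub (le_of_lt this)]; ring)]
    rw [← Nat.cast_prod, nat_prod_front]
  have h2 : ∏ m ∈ Ico (a+1) n, ((a : ℚ) - m)
      = (-1)^(n-1-a) * (n-1-a).factorial := by
    rw [prod_congr rfl (fun m hm => show (a:ℚ) - m = (-1) * ((m - a : ℕ) : ℚ) by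
      have := (mem_Ico.mp hm).1
      push_cast [Nat.cast_sub (by omega : a ≤ m)]; ring)]
    rw [prod_mul_distrib, prod_const, ← Nat.cast_prod, nat_prod_back n a ha,
      Nat.card_Ico, show n - (a+1) = n - 1 - a by omega]
  rw [h1, h2]; ring

lemma natKey (n j k : ℕ) (hj : j < n) (hk : k < n) :
    (k+j+1)^2 * Nat.choose (n+k) (n-j-1) * Nat.choose (n+j) (n-k-1)
      * (Nat.choose (k+j) k)^2 * j.factorial^2 * (n-j-1).factorial
      * k.factorial^2 * (n-k-1).factorial
    = (j+n).factorial * (k+n).factorial := by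
  have h1 : Nat.choose (n+k) (n-j-1) * (n-j-1).factorial * (k+j+1).factorial
      = (n+k).factorial := by
    have h := Nat.choose_mul_factorial_mul_factorial (show n-j-1 ≤ n+k by omega)
    rwa [show n+k-(n-j-1) = k+j+1 by omega] at h
  have h2 : Nat.choose (n+j) (n-k-1) * (n-k-1).factorial * (k+j+1).factorial
      = (n+j).factorial := by
    have h := Nat.choose_mul_factorial_mul_factorial (show n-k-1 ≤ n+j by omega)
    rwa [show n+j-(n-k-1) = k+j+1 by omega] at h
  have h3 : Nat.choose (k+j) k * k.factorial * j.factorial = (k+j).factorial := by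
    have h := Nat.choose_mul_factorial_mul_factorial (show k ≤ k+j by omega)
    rwa [show k+j-k = j by omega] at h
  have h4 : (k+j+1) * (Nat.choose (k+j) k * k.factorial * j.factorial)
      = (k+j+1).factorial := by
    rw [h3, Nat.factorial_succ]
  calc (k+j+1)^2 * Nat.choose (n+k) (n-j-1) * Nat.choose (n+j) (n-k-1)
      * (Nat.choose (k+j) k)^2 * j.factorial^2 * (n-j-1).factorial
      * k.factorial^2 * (n-k-1).factorial
      = (Nat.choose (n+k) (n-j-1) * (n-j-1).factorial
          * ((k+j+1) * (Nat.choose (k+j) k * k.factorial * j.factorial)))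
        * (Nat.choose (n+j) (n-k-1) * (n-k-1).factorial
          * ((k+j+1) * (Nat.choose (k+j) k * k.factorial * j.factorial))) := by ring
    _ = (n+k).factorial * (n+j).factorial := by rw [h4, h1, h2]
    _ = (j+n).factorial * (k+n).factorial := by
        rw [Nat.add_comm n k, Nat.add_comm n j]; ring

lemma ckey (n j k : ℕ) (hj : j < n) (hk : k < n) :
    ((-1:ℚ)^(k+j) * ((k:ℚ)+j+1) * (Nat.choose (n+k) (n-j-1) : ℚ)
        * (Nat.choose (n+j) (n-k-1) : ℚ) * (Nat.choose (k+j) k : ℚ)^2)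
      * ((-1:ℚ)^(n-j-1) * j.factorial * (n-j-1).factorial)
      * ((-1:ℚ)^(n-k-1) * k.factorial * (n-k-1).factorial)
    = ((j+n).factorial / j.factorial)
      * ((k+n).factorial / (k.factorial * ((k:ℚ)+j+1))) := by
  have hs : (-1:ℚ)^(k+j) * (-1:ℚ)^(n-j-1) * (-1:ℚ)^(n-k-1) = 1 := by
    rw [← pow_add, ← pow_add]
    exact Even.neg_one_pow ⟨n-1, by omega⟩
  have hcast : (((k:ℚ)+j+1)^2 * (Nat.choose (n+k) (n-j-1) : ℚ)
      * (Nat.choose (n+j) (n-k-1) : ℚ) * (Nat.choose (k+j) k : ℚ)^2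
      * (j.factorial:ℚ)^2 * ((n-j-1).factorial:ℚ)
      * (k.factorial:ℚ)^2 * ((n-k-1).factorial:ℚ)
      = ((j+n).factorial : ℚ) * ((k+n).factorial : ℚ)) := by
    exact_mod_cast congrArg (Nat.cast (R := ℚ)) (natKey n j k hj hk)
  have hj0 : (j.factorial : ℚ) ≠ 0 := by exact_mod_cast j.factorial_ne_zero
  have hk0 : (k.factorial : ℚ) ≠ 0 := by exact_mod_cast k.factorial_ne_zero
  have hkj0 : ((k:ℚ)+j+1) ≠ 0 := by positivity
  calc ((-1:ℚ)^(k+j) * ((k:ℚ)+j+1) * (Nat.choose (n+k) (n-j-1) : ℚ)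
        * (Nat.choose (n+j) (n-k-1) : ℚ) * (Nat.choose (k+j) k : ℚ)^2)
      * ((-1:ℚ)^(n-j-1) * j.factorial * (n-j-1).factorial)
      * ((-1:ℚ)^(n-k-1) * k.factorial * (n-k-1).factorial)
      = ((-1:ℚ)^(k+j) * (-1:ℚ)^(n-j-1) * (-1:ℚ)^(n-k-1))
        * (((k:ℚ)+j+1) * (Nat.choose (n+k) (n-j-1) : ℚ)
          * (Nat.choose (n+j) (n-k-1) : ℚ) * (Nat.choose (k+j) k : ℚ)^2
          * (j.factorial:ℚ) * ((n-j-1).factorial:ℚ)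
          * (k.factorial:ℚ) * ((n-k-1).factorial:ℚ)) := by ring
    _ = ((k:ℚ)+j+1) * (Nat.choose (n+k) (n-j-1) : ℚ)
          * (Nat.choose (n+j) (n-k-1) : ℚ) * (Nat.choose (k+j) k : ℚ)^2
          * (j.factorial:ℚ) * ((n-j-1).factorial:ℚ)
          * (k.factorial:ℚ) * ((n-k-1).factorial:ℚ) := by rw [hs, one_mul]
    _ = ((j+n).factorial / j.factorial)
      * ((k+n).factorial / (k.factorial * ((k:ℚ)+j+1))) := by
        field_simp
        linear_combination hcast


lemma alg_step (x c Aj Qj Qk Ai Rk e : ℚ) (hc : c * (Qj * Qk) = Aj * Rk)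
    (hQj : Qj ≠ 0) (hQk : Qk ≠ 0) (hAi : Ai ≠ 0) (he : e ≠ 0) (hx : x ≠ 0) :
    (1/x) * c = (Aj/(Qj*Ai)) * ((e * Rk) * ((Ai/x) * (e * Qk)⁻¹)) := by
  field_simp
  linear_combination hc

lemma key (n i j : ℕ) (hi : i < n) (hj : j < n) :
    ∑ k ∈ range n, (1/((i:ℚ)+k+1)) *
      ((-1:ℚ)^(k+j) * ((k:ℚ)+j+1) * (Nat.choose (n+k) (n-j-1) : ℚ)
        * (Nat.choose (n+j) (n-k-1) : ℚ) * (Nat.choose (k+j) k : ℚ)^2)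
    = if i = j then 1 else 0 := by
  classical
  set v : ℕ → ℚ := fun k => -((k:ℚ)+1) with hv
  have hinj : Set.InjOn v (range n) := by
    intro a _ b _ hab
    simp only [hv, neg_inj, add_left_inj, Nat.cast_inj] at hab
    exact hab
  set f : ℚ[X] := ∏ m ∈ (range n).erase j, (X - C (m:ℚ)) with hf
  have hjmem : j ∈ range n := mem_range.mpr hj
  have hdeg : f.degree < ((range n).card : ℕ) := by
    rw [hf, Polynomial.degree_prod]
    simp only [Polynomial.degree_X_sub_C, sum_const, card_erase_of_mem hjmem,
      card_range, nsmul_eq_mul, mul_one]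
    exact_mod_cast Nat.sub_lt (by omega) (by omega)
  have hlag := Lagrange.eq_interpolate hinj hdeg
  have heval := congrArg (Polynomial.eval (i:ℚ)) hlag
  rw [Lagrange.interpolate_apply, Polynomial.eval_finset_sum] at heval
  simp only [Polynomial.eval_mul, Polynomial.eval_C] at heval
  -- abbreviations
  have hfe : ∀ x : ℚ, f.eval x = ∏ m ∈ (range n).erase j, (x - (m:ℚ)) := by
    intro x
    rw [hf, Polynomial.eval_prod]
    exact prod_congr rfl fun m _ => by simp
  -- basis evaluation
  have hAgen : ∀ q : ℕ, ∏ m ∈ range n, ((q:ℚ)+m+1) = ((q+n).factorial : ℚ) / q.factorial :=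
    fun q => q_prodA q n
  have hbasis : ∀ k ∈ range n, (Lagrange.basis (range n) v k).eval (i:ℚ)
      = ((((i+n).factorial : ℚ) / i.factorial) / ((i:ℚ)+k+1))
        * ((-1:ℚ)^(n-1) * ((-1:ℚ)^(n-k-1) * k.factorial * (n-k-1).factorial))⁻¹ := by
    intro k hk
    have hkn : k < n := mem_range.mp hk
    rw [Lagrange.basis, Polynomial.eval_prod]
    have step : ∀ m ∈ (range n).erase k,
        (Lagrange.basisDivisor (v k) (v m)).eval (i:ℚ)
          = ((m:ℚ) - k)⁻¹ * ((i:ℚ) + m + 1) := by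
      intro m _
      rw [Lagrange.basisDivisor]
      simp only [Polynomial.eval_mul, Polynomial.eval_C, Polynomial.eval_sub,
        Polynomial.eval_X, hv]
      ring_nf
    rw [prod_congr rfl step, prod_mul_distrib, prod_inv_distrib]
    have hnum : ∏ m ∈ (range n).erase k, ((i:ℚ) + m + 1)
        = ((((i+n).factorial : ℚ) / i.factorial) / ((i:ℚ)+k+1)) := by
      have h := Finset.prod_erase_mul (range n) (fun m => ((i:ℚ) + m + 1)) hk
      rw [hAgen i] at h
      field_simp at h ⊢
      linear_combination h
    have hden : ∏ m ∈ (range n).erase k, ((m:ℚ) - k)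
        = (-1:ℚ)^(n-1) * ((-1:ℚ)^(n-k-1) * k.factorial * (n-k-1).factorial) := by
      have e1 : ∀ m ∈ (range n).erase k, ((m:ℚ) - k) = (-1) * ((k:ℚ) - m) :=
        fun m _ => by ring
      rw [prod_congr rfl e1, prod_mul_distrib, prod_const,
        card_erase_of_mem hk, card_range, q_prodQ n k hkn,
        show n - 1 - k = n - k - 1 by omega]
    rw [hnum, hden]
    ring
  -- f evaluated at nodes
  have hfv : ∀ k ∈ range n, f.eval (v k)
      = (-1:ℚ)^(n-1) * (((k+n).factorial : ℚ) / (k.factorial * ((k:ℚ)+j+1))) := by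
    intro k hk
    rw [hfe]
    have e1 : ∀ m ∈ (range n).erase j, (v k - (m:ℚ)) = (-1) * ((k:ℚ) + m + 1) :=
      fun m _ => by simp only [hv]; ring
    rw [prod_congr rfl e1, prod_mul_distrib, prod_const,
      card_erase_of_mem hjmem, card_range]
    have hprod : (∏ m ∈ (range n).erase j, ((k:ℚ) + m + 1)) * ((k:ℚ) + j + 1)
        = ((k+n).factorial : ℚ) / k.factorial := by
      have := Finset.prod_erase_mul (range n) (fun m => ((k:ℚ) + m + 1)) hjmem
      rw [hAgen k] at this
      exact this
    have hkj0 : ((k:ℚ)+j+1) ≠ 0 := by positivity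
    have : ∏ m ∈ (range n).erase j, ((k:ℚ) + m + 1)
        = ((k+n).factorial : ℚ) / (k.factorial * ((k:ℚ)+j+1)) := by
      field_simp at hprod ⊢
      linear_combination hprod
    rw [this]
  -- final assembly
  have hj0 : (j.factorial : ℚ) ≠ 0 := by exact_mod_cast j.factorial_ne_zero
  have hQj0 : ((-1:ℚ)^(n-j-1) * j.factorial * (n-j-1).factorial) ≠ 0 := by
    apply mul_ne_zero
    apply mul_ne_zero
    · exact pow_ne_zero _ (by norm_num)
    · exact hj0
    · exact_mod_cast (n-j-1).factorial_ne_zero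
  have hAi0 : (((i+n).factorial : ℚ) / i.factorial) ≠ 0 := by
    apply div_ne_zero
    · exact_mod_cast (i+n).factorial_ne_zero
    · exact_mod_cast i.factorial_ne_zero
  have he0 : ((-1:ℚ)^(n-1)) ≠ 0 := pow_ne_zero _ (by norm_num)
  have hsum : ∑ k ∈ range n, (1/((i:ℚ)+k+1)) *
      ((-1:ℚ)^(k+j) * ((k:ℚ)+j+1) * (Nat.choose (n+k) (n-j-1) : ℚ)
        * (Nat.choose (n+j) (n-k-1) : ℚ) * (Nat.choose (k+j) k : ℚ)^2)
      = ((((j+n).factorial : ℚ) / j.factorial)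
          / (((-1:ℚ)^(n-j-1) * j.factorial * (n-j-1).factorial)
              * (((i+n).factorial : ℚ) / i.factorial)))
        * ∑ k ∈ range n, (Polynomial.eval (v k) f)
            * (Lagrange.basis (range n) v k).eval (i:ℚ) := by
    rw [mul_sum]
    refine sum_congr rfl fun k hk => ?_
    have hkn : k < n := mem_range.mp hk
    rw [hfv k hk, hbasis k hk]
    have hQk0 : ((-1:ℚ)^(n-k-1) * k.factorial * (n-k-1).factorial) ≠ 0 := by
      apply mul_ne_zero
      apply mul_ne_zero
      · exact pow_ne_zero _ (by norm_num)
      · exact_mod_cast k.factorial_ne_zero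
      · exact_mod_cast (n-k-1).factorial_ne_zero
    have hc := ckey n j k hj hkn
    exact alg_step _ _ _ _ _ _ _ _ (by linear_combination hc) hQj0 hQk0 hAi0 he0
      (by positivity)
  rw [hsum, ← heval]
  by_cases hij : i = j
  · subst hij
    rw [if_pos rfl]
    have hfi : Polynomial.eval (i:ℚ) f
        = (-1:ℚ)^(n-i-1) * i.factorial * (n-i-1).factorial := by
      rw [hfe, q_prodQ n i hi, show n-1-i = n-i-1 by omega]
    rw [hfi]
    field_simp
  · simp only [if_neg hij]
    have hfi : Polynomial.eval (i:ℚ) f = 0 := by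
      rw [hfe]
      refine prod_eq_zero (mem_erase.mpr ⟨?_, mem_range.mpr hi⟩) (by simp)
      exact fun h => hij (Nat.cast_injective h)
    rw [hfi, mul_zero]


theorem hilbert_matrix_inverse (n : ℕ)
    (Hn B : Matrix (Fin n) (Fin n) ℚ)
    (hH : ∀ i j : Fin n, Hn i j = 1 / ((i : ℕ) + (j : ℕ) + 1 : ℚ))
    (hB : ∀ i j : Fin n, B i j =
      (-1 : ℚ) ^ ((i : ℕ) + (j : ℕ)) * ((i : ℕ) + (j : ℕ) + 1 : ℚ) *
        (Nat.choose (n + (i : ℕ)) (n - (j : ℕ) - 1) : ℚ) *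
        (Nat.choose (n + (j : ℕ)) (n - (i : ℕ) - 1) : ℚ) *
        ((Nat.choose ((i : ℕ) + (j : ℕ)) (i : ℕ) : ℚ)) ^ 2) :
    Hn * B = 1 ∧ B * Hn = 1 := by
  have hmain : Hn * B = 1 := by
    ext i j
    rw [Matrix.mul_apply, Matrix.one_apply]
    have hstep : ∑ k : Fin n, Hn i k * B k j
        = ∑ k ∈ range n, (1/(((i:ℕ):ℚ)+k+1)) *
          ((-1:ℚ)^(k+(j:ℕ)) * ((k:ℚ)+((j:ℕ):ℚ)+1) * (Nat.choose (n+k) (n-(j:ℕ)-1) : ℚ)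
            * (Nat.choose (n+(j:ℕ)) (n-k-1) : ℚ) * (Nat.choose (k+(j:ℕ)) k : ℚ)^2) := by
      rw [← Fin.sum_univ_eq_sum_range (fun k : ℕ => (1/(((i:ℕ):ℚ)+k+1)) *
          ((-1:ℚ)^(k+(j:ℕ)) * ((k:ℚ)+((j:ℕ):ℚ)+1) * (Nat.choose (n+k) (n-(j:ℕ)-1) : ℚ)
            * (Nat.choose (n+(j:ℕ)) (n-k-1) : ℚ) * (Nat.choose (k+(j:ℕ)) k : ℚ)^2)) n]
      exact Finset.sum_congr rfl fun k _ => by rw [hH, hB]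
    rw [hstep, key n i j i.isLt j.isLt]
    simp [Fin.val_eq_val]
  exact ⟨hmain, mul_eq_one_comm.mp hmain⟩
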